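/- arXiv:2308.11678 — 3 statements merged into one kernel-verified Lean document; each statement's English description precedes it below -/
import Mathlib

section
/- Let $c > 1$, $T > 0$, and let $\varphi, \psi : [0,T) \to (0,\infty)$ be differentiable functions satisfying $\varphi'(t) \ge \psi(t) > 0$, $\psi'(t) \ge 0$, and $(\varphi'(t))^2 \le \frac{1}{c}\psi'(t)\varphi(t)$ for all $t \in [0,T)$. Then $T \le [(c-1)\psi(0)]^{-1}\varphi(0)$. -/
open Set

/-- Abstract ODE blow-up lemma (concavity method): if `φ' ≥ ψ > 0`, `ψ' ≥ 0` and
`(φ')^2 ≤ (1/c) ψ' φ` on `[0,T)` with `c > 1`, then `T ≤ [(c-1)ψ(0)]⁻¹ φ(0)`. -/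
theorem stmt2 (c T : ℝ) (hc : 1 < c) (hT : 0 < T)
    (φ ψ φ' ψ' : ℝ → ℝ)
    (hφpos : ∀ t ∈ Ico (0:ℝ) T, 0 < φ t)
    (hψpos : ∀ t ∈ Ico (0:ℝ) T, 0 < ψ t)
    (hφd : ∀ t ∈ Ico (0:ℝ) T, HasDerivAt φ (φ' t) t)
    (hψd : ∀ t ∈ Ico (0:ℝ) T, HasDerivAt ψ (ψ' t) t)
    (h1 : ∀ t ∈ Ico (0:ℝ) T, ψ t ≤ φ' t)
    (h2 : ∀ t ∈ Ico (0:ℝ) T, 0 ≤ ψ' t)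
    (h3 : ∀ t ∈ Ico (0:ℝ) T, (φ' t) ^ 2 ≤ (1 / c) * ψ' t * φ t) :
    T ≤ ((c - 1) * ψ 0)⁻¹ * φ 0 := by
  by_contra hcon
  push_neg at hcon
  set B : ℝ := ((c - 1) * ψ 0)⁻¹ * φ 0 with hB
  have h0mem : (0:ℝ) ∈ Ico (0:ℝ) T := ⟨le_refl _, hT⟩
  have hφ0 : 0 < φ 0 := hφpos 0 h0mem
  have hψ0 : 0 < ψ 0 := hψpos 0 h0mem
  have hc0 : (0:ℝ) < c := by linarith
  have hc1 : (0:ℝ) < c - 1 := by linarith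
  have hB0 : 0 < B := by
    rw [hB]; positivity
  -- key pointwise inequality: c ψ φ' ≤ ψ' φ
  have key : ∀ t ∈ Ico (0:ℝ) T, c * (ψ t * φ' t) ≤ ψ' t * φ t := by
    intro t ht
    have hψt := hψpos t ht
    have h1t := h1 t ht
    have hφ't : 0 < φ' t := lt_of_lt_of_le hψt h1t
    have hsq : ψ t * φ' t ≤ (φ' t) ^ 2 := by nlinarith
    have hc' : c * (φ' t) ^ 2 ≤ ψ' t * φ t := by
      have h := mul_le_mul_of_nonneg_left (h3 t ht) hc0.le
      have he : c * (1 / c * ψ' t * φ t) = ψ' t * φ t := by field_simp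
      rw [he] at h
      exact h
    nlinarith
  -- G := ψ * φ^(-c) is monotone on [0,T)
  set G : ℝ → ℝ := fun t => ψ t * φ t ^ (-c) with hG
  have hGd : ∀ t ∈ Ico (0:ℝ) T,
      HasDerivAt G (ψ' t * φ t ^ (-c) + ψ t * (φ' t * (-c) * φ t ^ (-c - 1))) t := by
    intro t ht
    exact (hψd t ht).mul ((hφd t ht).rpow_const (Or.inl (hφpos t ht).ne'))
  have hGd' : ∀ x ∈ Ioo (0:ℝ) T, 0 ≤ deriv G x := by
    intro x hx
    have hxm : x ∈ Ico (0:ℝ) T := Ioo_subset_Ico_self hx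
    rw [(hGd x hxm).deriv]
    have hφx := hφpos x hxm
    have e1 : φ x ^ (-c) = φ x * φ x ^ (-c - 1) := by
      rw [show φ x * φ x ^ (-c - 1) = φ x ^ (1:ℝ) * φ x ^ (-c - 1) by rw [Real.rpow_one],
        ← Real.rpow_add hφx]
      norm_num
    have hq : 0 < φ x ^ (-c - 1) := Real.rpow_pos_of_pos hφx _
    have hk := key x hxm
    rw [e1]
    nlinarith [mul_nonneg hq.le (sub_nonneg.mpr hk)]
  have hGc : ContinuousOn G (Ico 0 T) := fun t ht =>
    ((hGd t ht).continuousAt).continuousWithinAt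
  have hGmono : MonotoneOn G (Ico 0 T) := by
    apply monotoneOn_of_deriv_nonneg (convex_Ico 0 T) hGc
    · intro x hx
      rw [interior_Ico] at hx
      exact ((hGd x (Ioo_subset_Ico_self hx)).differentiableAt).differentiableWithinAt
    · intro x hx
      rw [interior_Ico] at hx
      exact hGd' x hx
  have hG0pos : 0 < G 0 := by
    rw [hG]; exact mul_pos hψ0 (Real.rpow_pos_of_pos hφ0 _)
  -- H := φ^(1-c) + (c-1) G 0 * t is antitone on [0,T)
  set H : ℝ → ℝ := fun t => φ t ^ (1 - c) + (c - 1) * G 0 * t with hH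
  have hHd : ∀ t ∈ Ico (0:ℝ) T,
      HasDerivAt H (φ' t * (1 - c) * φ t ^ (1 - c - 1) + (c - 1) * G 0) t := by
    intro t ht
    have hd1 := (hφd t ht).rpow_const (p := 1 - c) (Or.inl (hφpos t ht).ne')
    have hd2 : HasDerivAt (fun t : ℝ => (c - 1) * G 0 * t) ((c - 1) * G 0) t := by
      simpa using (hasDerivAt_id t).const_mul ((c - 1) * G 0)
    exact hd1.add hd2
  have hHd' : ∀ x ∈ Ioo (0:ℝ) T, deriv H x ≤ 0 := by
    intro x hx
    have hxm : x ∈ Ico (0:ℝ) T := Ioo_subset_Ico_self hx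
    rw [(hHd x hxm).deriv]
    have hφx := hφpos x hxm
    have hq : 0 < φ x ^ (-c) := Real.rpow_pos_of_pos hφx _
    have e1 : (1 - c - 1) = -c := by ring
    rw [e1]
    -- G 0 ≤ G x = ψ x * φ x ^ (-c) ≤ φ' x * φ x ^ (-c)
    have hGle : G 0 ≤ ψ x * φ x ^ (-c) := hGmono h0mem hxm hx.1.le
    have h1x := h1 x hxm
    have : G 0 ≤ φ' x * φ x ^ (-c) := by nlinarith
    nlinarith
  have hHc : ContinuousOn H (Ico 0 T) := fun t ht =>
    ((hHd t ht).continuousAt).continuousWithinAt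
  have hHanti : AntitoneOn H (Ico 0 T) := by
    apply antitoneOn_of_deriv_nonpos (convex_Ico 0 T) hHc
    · intro x hx
      rw [interior_Ico] at hx
      exact ((hHd x (Ioo_subset_Ico_self hx)).differentiableAt).differentiableWithinAt
    · intro x hx
      rw [interior_Ico] at hx
      exact hHd' x hx
  -- choose t between B and T
  set t : ℝ := (B + T) / 2 with htdef
  have htB : B < t := by rw [htdef]; linarith
  have htT : t < T := by rw [htdef]; linarith
  have htm : t ∈ Ico (0:ℝ) T := ⟨by linarith, htT⟩
  have hHt : H t ≤ H 0 := hHanti h0mem htm (by linarith)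
  have hH0 : H 0 = φ 0 ^ (1 - c) := by
    rw [hH]; simp
  have hφtpos : 0 < φ t ^ (1 - c) := Real.rpow_pos_of_pos (hφpos t htm) _
  have hkey2 : (c - 1) * G 0 * t < φ 0 ^ (1 - c) := by
    have : φ t ^ (1 - c) + (c - 1) * G 0 * t ≤ φ 0 ^ (1 - c) := by
      rw [← hH0]; exact hHt
    linarith
  -- but (c-1) * G 0 * B = φ 0 ^ (1 - c)
  have hBe : (c - 1) * G 0 * B = φ 0 ^ (1 - c) := by
    have h1c : (1 - c) = -c + 1 := by ring
    rw [hG, hB, h1c, Real.rpow_add hφ0, Real.rpow_one]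
    field_simp
  have hpos : 0 < (c - 1) * G 0 := mul_pos hc1 hG0pos
  have : (c - 1) * G 0 * B < (c - 1) * G 0 * t :=
    mul_lt_mul_of_pos_left htB hpos
  rw [hBe] at this
  linarith
end

section
/- Let $a : \mathbb{R} \to \mathbb{R}$ be $C^1$ with $a' \ge 0$, let $A(u) = \int_0^u a(s)\,ds + C_0$ be positive, and suppose $a(u)^2 \le k^2 a'(u) A(u)$ for all $u$, with $0 < k < \sqrt{2}$. Then for any sufficiently smooth function $u(\cdot,t)$ on a bounded domain $\Omega$, setting $\varphi(t) = \int_\Omega A(u(x,t))\,dx$, one has $\varphi'(t)^2 \le \frac{k^2}{2}\cdot\left(2\int_\Omega a'(u)|u_t|^2\,dx\right)\cdot \varphi(t)$. -/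
open MeasureTheory Set

/-- Cauchy–Schwarz for real integrals. -/
lemma cs_integral {α : Type*} [MeasurableSpace α] {μ : Measure α} {f g : α → ℝ}
    (hf : MemLp f 2 μ) (hg : MemLp g 2 μ) :
    (∫ x, f x * g x ∂μ) ^ 2 ≤ (∫ x, f x ^ 2 ∂μ) * (∫ x, g x ^ 2 ∂μ) := by
  have hpq : Real.HolderConjugate 2 2 := ⟨by norm_num, by norm_num, by norm_num⟩
  have h2 : (ENNReal.ofReal (2:ℝ)) = 2 := by norm_num
  have h := integral_mul_norm_le_Lp_mul_Lq hpq (by rw [h2]; exact hf) (by rw [h2]; exact hg)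
  have h1 : |∫ x, f x * g x ∂μ| ≤ ∫ x, ‖f x‖ * ‖g x‖ ∂μ := by
    simpa [abs_mul] using norm_integral_le_integral_norm (μ := μ) (fun x => f x * g x)
  have hF : (∫ x, ‖f x‖ ^ (2:ℝ) ∂μ) = ∫ x, f x ^ 2 ∂μ := by
    refine integral_congr_ae (Filter.Eventually.of_forall fun x => ?_)
    show ‖f x‖ ^ (2:ℝ) = f x ^ 2
    rw [show ((2:ℝ)) = ((2:ℕ):ℝ) by norm_num, Real.rpow_natCast]
    simp [sq_abs]
  have hG : (∫ x, ‖g x‖ ^ (2:ℝ) ∂μ) = ∫ x, g x ^ 2 ∂μ := by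
    refine integral_congr_ae (Filter.Eventually.of_forall fun x => ?_)
    show ‖g x‖ ^ (2:ℝ) = g x ^ 2
    rw [show ((2:ℝ)) = ((2:ℕ):ℝ) by norm_num, Real.rpow_natCast]
    simp [sq_abs]
  have hFnn : 0 ≤ ∫ x, f x ^ 2 ∂μ := integral_nonneg fun x => sq_nonneg _
  have hGnn : 0 ≤ ∫ x, g x ^ 2 ∂μ := integral_nonneg fun x => sq_nonneg _
  have h3 : (∫ x, ‖f x‖ * ‖g x‖ ∂μ) ≤
      Real.sqrt (∫ x, f x ^ 2 ∂μ) * Real.sqrt (∫ x, g x ^ 2 ∂μ) := by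
    calc (∫ x, ‖f x‖ * ‖g x‖ ∂μ)
        ≤ (∫ x, ‖f x‖ ^ (2:ℝ) ∂μ) ^ ((1:ℝ)/2) * (∫ x, ‖g x‖ ^ (2:ℝ) ∂μ) ^ ((1:ℝ)/2) := h
      _ = Real.sqrt (∫ x, f x ^ 2 ∂μ) * Real.sqrt (∫ x, g x ^ 2 ∂μ) := by
          rw [hF, hG, ← Real.sqrt_eq_rpow, ← Real.sqrt_eq_rpow]
  calc (∫ x, f x * g x ∂μ) ^ 2 = |∫ x, f x * g x ∂μ| ^ 2 := (sq_abs _).symm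
    _ ≤ (Real.sqrt (∫ x, f x ^ 2 ∂μ) * Real.sqrt (∫ x, g x ^ 2 ∂μ)) ^ 2 := by
        apply pow_le_pow_left₀ (abs_nonneg _) (h1.trans h3)
    _ = (∫ x, f x ^ 2 ∂μ) * (∫ x, g x ^ 2 ∂μ) := by
        rw [mul_pow, Real.sq_sqrt hFnn, Real.sq_sqrt hGnn]

lemma integrableOn_of_bounded {N : ℕ} {Ω : Set (EuclideanSpace ℝ (Fin N))}
    (hΩb : Bornology.IsBounded Ω) {f : EuclideanSpace ℝ (Fin N) → ℝ} (hf : Continuous f) :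
    IntegrableOn f Ω := by
  exact (hf.continuousOn.integrableOn_compact hΩb.isCompact_closure).mono_set subset_closure

/-- Cauchy–Schwarz step of the concavity method: if `a' ≥ 0`, `A` is a positive
potential of `a` and `a(u)^2 ≤ k^2 a'(u) A(u)`, then for `φ(t) = ∫ A(u)` one has
`(φ')^2 = (∫ a(u) u_t)^2 ≤ (k^2/2) (2 ∫ a'(u)|u_t|^2) φ`. -/
theorem stmt3 (N : ℕ) (Ω : Set (EuclideanSpace ℝ (Fin N))) (hΩb : Bornology.IsBounded Ω)
    (a : ℝ → ℝ) (ha : ContDiff ℝ 1 a) (ha' : ∀ s, 0 ≤ deriv a s)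
    (C0 k : ℝ) (hk0 : 0 < k) (hk : k < Real.sqrt 2)
    (A : ℝ → ℝ) (hA : ∀ u, A u = (∫ s in (0:ℝ)..u, a s) + C0)
    (hApos : ∀ u, 0 < A u)
    (hcond : ∀ u, a u ^ 2 ≤ k ^ 2 * deriv a u * A u) :
    ∀ u ut : EuclideanSpace ℝ (Fin N) → ℝ, Continuous u → Continuous ut →
      (∫ x in Ω, a (u x) * ut x) ^ 2 ≤
        (k ^ 2 / 2) * (2 * ∫ x in Ω, deriv a (u x) * (ut x) ^ 2) * (∫ x in Ω, A (u x)) := by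
  intro u ut hu hut
  have hderiv : Continuous (deriv a) := (ha.continuous_deriv le_rfl)
  set f : EuclideanSpace ℝ (Fin N) → ℝ := fun x => Real.sqrt (deriv a (u x)) * ut x with hfdef
  set g : EuclideanSpace ℝ (Fin N) → ℝ := fun x => a (u x) / Real.sqrt (deriv a (u x)) with hgdef
  have hfcont : Continuous f := ((hderiv.comp hu).sqrt).mul hut
  -- key pointwise facts
  have hzero : ∀ x, deriv a (u x) = 0 → a (u x) = 0 := by
    intro x hx
    have := hcond (u x)
    rw [hx] at this
    nlinarith [sq_nonneg (a (u x))]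
  have hfg : ∀ x, f x * g x = a (u x) * ut x := by
    intro x
    by_cases hx : deriv a (u x) = 0
    · simp [hfdef, hgdef, hx, hzero x hx]
    · have hpos : 0 < deriv a (u x) := lt_of_le_of_ne (ha' _) (Ne.symm hx)
      have hs : Real.sqrt (deriv a (u x)) ≠ 0 := by positivity
      simp only [hfdef, hgdef]
      field_simp
  have hf2 : ∀ x, f x ^ 2 = deriv a (u x) * ut x ^ 2 := by
    intro x
    simp only [hfdef, mul_pow, Real.sq_sqrt (ha' (u x))]
  have hg2 : ∀ x, g x ^ 2 ≤ k ^ 2 * A (u x) := by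
    intro x
    by_cases hx : deriv a (u x) = 0
    · have h0 : g x = 0 := by simp [hgdef, hx]
      rw [h0]
      simpa using mul_nonneg (sq_nonneg k) (hApos (u x)).le
    · have hpos : 0 < deriv a (u x) := lt_of_le_of_ne (ha' _) (Ne.symm hx)
      have : g x ^ 2 = a (u x) ^ 2 / deriv a (u x) := by
        rw [hgdef, div_pow, Real.sq_sqrt (ha' (u x))]
      rw [this, div_le_iff₀ hpos]
      calc a (u x) ^ 2 ≤ k ^ 2 * deriv a (u x) * A (u x) := hcond (u x)
        _ = k ^ 2 * A (u x) * deriv a (u x) := by ring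
  -- integrability
  have hif2 : IntegrableOn (fun x => f x ^ 2) Ω :=
    integrableOn_of_bounded hΩb (hfcont.pow 2)
  have hiA : IntegrableOn (fun x => k ^ 2 * A (u x)) Ω := by
    have hAc : Continuous A := by
      have : Continuous fun v : ℝ => ∫ s in (0:ℝ)..v, a s :=
        intervalIntegral.continuous_primitive (fun _ _ => ha.continuous.intervalIntegrable _ _) 0
      have : Continuous fun v : ℝ => (∫ s in (0:ℝ)..v, a s) + C0 := this.add continuous_const
      exact (continuous_congr hA).mpr this
    exact integrableOn_of_bounded hΩb (continuous_const.mul (hAc.comp hu))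
  have hgm : AEStronglyMeasurable g (volume.restrict Ω) := by
    exact ((ha.continuous.comp hu).measurable.div
      ((hderiv.comp hu).sqrt.measurable)).aestronglyMeasurable
  have hig2 : IntegrableOn (fun x => g x ^ 2) Ω := by
    refine Integrable.mono' hiA (hgm.pow 2) ?_
    refine Filter.Eventually.of_forall fun x => ?_
    rw [Real.norm_of_nonneg (sq_nonneg _)]
    exact hg2 x
  have hfL2 : MemLp f 2 (volume.restrict Ω) :=
    (memLp_two_iff_integrable_sq hfcont.aestronglyMeasurable).mpr hif2
  have hgL2 : MemLp g 2 (volume.restrict Ω) :=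
    (memLp_two_iff_integrable_sq hgm).mpr hig2
  have hCS := cs_integral hfL2 hgL2
  have e1 : (∫ x in Ω, f x * g x) = ∫ x in Ω, a (u x) * ut x :=
    integral_congr_ae (Filter.Eventually.of_forall fun x => hfg x)
  have e2 : (∫ x in Ω, f x ^ 2) = ∫ x in Ω, deriv a (u x) * ut x ^ 2 :=
    integral_congr_ae (Filter.Eventually.of_forall fun x => hf2 x)
  have e3 : (∫ x in Ω, g x ^ 2) ≤ k ^ 2 * ∫ x in Ω, A (u x) := by
    calc (∫ x in Ω, g x ^ 2) ≤ ∫ x in Ω, k ^ 2 * A (u x) :=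
          integral_mono hig2 hiA hg2
      _ = k ^ 2 * ∫ x in Ω, A (u x) := by rw [integral_const_mul]
  have hXnn : 0 ≤ ∫ x in Ω, f x ^ 2 := integral_nonneg fun x => sq_nonneg _
  calc (∫ x in Ω, a (u x) * ut x) ^ 2 = (∫ x in Ω, f x * g x) ^ 2 := by rw [e1]
    _ ≤ (∫ x in Ω, f x ^ 2) * (∫ x in Ω, g x ^ 2) := hCS
    _ ≤ (∫ x in Ω, f x ^ 2) * (k ^ 2 * ∫ x in Ω, A (u x)) :=
        mul_le_mul_of_nonneg_left e3 hXnn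
    _ = (k ^ 2 / 2) * (2 * ∫ x in Ω, deriv a (u x) * (ut x) ^ 2) * (∫ x in Ω, A (u x)) := by
        rw [← e2]; ring
end

section
/- (Slicing BMO estimate.) Let $W \in C^1$ on $Q = B_R \times (0,R) \subset \mathbb{R}^2 \times \mathbb{R}$, suppose for some $s \in (0,R)$ and $\varepsilon > 0$ that $\frac{1}{R^2}\int_{B_R}|W(x,s) - W_{B_R}|\,dx \le \varepsilon$ and $\int_0^R \int_{B_R} |D_{x_3}W(x,x_3)|^2\,dx\,dx_3 \le \varepsilon R$. Then $\frac{1}{R^3}\int_Q |W - W_Q|\,dz \le C(\sqrt{\varepsilon} + \varepsilon)$ for a universal constant $C$, where $W_Q$ and $W_{B_R}$ denote mean values over $Q$ and $B_R$ respectively. -/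
open MeasureTheory Set

lemma aux_cs {α : Type*} [MeasurableSpace α] {μ : Measure α} [IsFiniteMeasure μ] {f : α → ℝ}
    (hm : AEStronglyMeasurable f μ) (h0 : ∀ x, 0 ≤ f x)
    (h2 : Integrable (fun x => f x ^ 2) μ) :
    ∫ x, f x ∂μ ≤ Real.sqrt (μ univ).toReal * Real.sqrt (∫ x, f x ^ 2 ∂μ) := by
  have hf2 : MemLp f 2 μ := (memLp_two_iff_integrable_sq hm).2 h2
  have hg2 : MemLp (fun _ : α => (1 : ℝ)) 2 μ := memLp_const 1
  have hpq : Real.HolderConjugate 2 2 := by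
    rw [Real.holderConjugate_iff]; norm_num
  have h2e : ENNReal.ofReal (2 : ℝ) = 2 := by norm_num
  have := integral_mul_le_Lp_mul_Lq_of_nonneg hpq (Filter.Eventually.of_forall h0)
    (Filter.Eventually.of_forall fun _ => zero_le_one) (h2e ▸ hf2) (h2e ▸ hg2)
  simp only [mul_one, Real.one_rpow] at this
  have h1 : ∫ x, f x ∂μ ≤ (∫ x, f x ^ (2:ℝ) ∂μ) ^ ((1:ℝ)/2) * (∫ _x, (1:ℝ) ∂μ) ^ ((1:ℝ)/2) := this
  have hr : ∀ y : ℝ, y ^ (2:ℝ) = y ^ 2 := fun y => Real.rpow_two y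
  rw [integral_const, smul_eq_mul, mul_one] at h1
  calc ∫ x, f x ∂μ ≤ (∫ x, f x ^ (2:ℝ) ∂μ) ^ ((1:ℝ)/2) * ((μ univ).toReal) ^ ((1:ℝ)/2) := h1
    _ = Real.sqrt (μ univ).toReal * Real.sqrt (∫ x, f x ^ 2 ∂μ) := by
        simp_rw [hr]
        rw [← Real.sqrt_eq_rpow, ← Real.sqrt_eq_rpow, mul_comm]

set_option maxHeartbeats 2000000 in
/-- Slicing BMO estimate on a cylinder `Q = B_R × (0,R) ⊂ ℝ² × ℝ`: if the mean
oscillation of `W` on one slice is at most `ε` and the vertical Dirichlet energy is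
at most `εR`, then the mean oscillation of `W` over `Q` is at most `C(√ε + ε)`. -/
theorem stmt15 :
    ∃ C > (0:ℝ), ∀ (m : ℕ) (R s ε : ℝ), 0 < R → s ∈ Ioo (0:ℝ) R → 0 < ε →
    ∀ W : EuclideanSpace ℝ (Fin 2) → ℝ → EuclideanSpace ℝ (Fin m),
    ContDiff ℝ 1 (fun p : EuclideanSpace ℝ (Fin 2) × ℝ => W p.1 p.2) →
    (1 / R ^ 2) * (∫ x in Metric.ball (0 : EuclideanSpace ℝ (Fin 2)) R,
        ‖W x s - (Real.pi * R ^ 2)⁻¹ •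
          (∫ y in Metric.ball (0 : EuclideanSpace ℝ (Fin 2)) R, W y s)‖) ≤ ε →
    (∫ x3 in Ioo (0:ℝ) R, ∫ x in Metric.ball (0 : EuclideanSpace ℝ (Fin 2)) R,
        ‖deriv (W x) x3‖ ^ 2) ≤ ε * R →
    (1 / R ^ 3) * (∫ x3 in Ioo (0:ℝ) R,
        ∫ x in Metric.ball (0 : EuclideanSpace ℝ (Fin 2)) R,
          ‖W x x3 - (Real.pi * R ^ 3)⁻¹ • (∫ t3 in Ioo (0:ℝ) R,
            ∫ y in Metric.ball (0 : EuclideanSpace ℝ (Fin 2)) R, W y t3)‖) ≤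
      C * (Real.sqrt ε + ε) := by
  refine ⟨2 * Real.sqrt Real.pi + 2, by positivity, ?_⟩
  intro m R s ε hR hs hε W hW h1 h2
  set B := Metric.ball (0 : EuclideanSpace ℝ (Fin 2)) R with hBdef
  set J := Ioo (0:ℝ) R with hJdef
  set a := (Real.pi * R ^ 2)⁻¹ • (∫ y in B, W y s) with hadef
  set c := (Real.pi * R ^ 3)⁻¹ • (∫ t3 in J, ∫ y in B, W y t3) with hcdef
  set Q := (volume.restrict B).prod (volume.restrict J) with hQdef
  have hπ : (0:ℝ) < Real.pi := Real.pi_pos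
  have hR3 : (0:ℝ) < R ^ 3 := pow_pos hR 3
  have hπR3 : (0:ℝ) < Real.pi * R ^ 3 := by positivity
  -- volumes
  have hvolJ : volume J = ENNReal.ofReal R := by
    rw [hJdef, Real.volume_Ioo, sub_zero]
  have hvolB : volume B = ENNReal.ofReal (Real.pi * R ^ 2) := by
    rw [hBdef, EuclideanSpace.volume_ball]
    have hcard : Fintype.card (Fin 2) = 2 := Fintype.card_fin 2
    rw [hcard]
    have hg : Real.Gamma ((2:ℕ) / 2 + 1) = 1 := by
      norm_num
    rw [hg, div_one, Real.sq_sqrt hπ.le, ← ENNReal.ofReal_pow hR.le,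
      ← ENNReal.ofReal_mul (by positivity), mul_comm]
  haveI hfinB : IsFiniteMeasure (volume.restrict B) :=
    ⟨by rw [Measure.restrict_apply_univ]; exact measure_ball_lt_top⟩
  haveI hfinJ : IsFiniteMeasure (volume.restrict J) :=
    ⟨by rw [Measure.restrict_apply_univ, hvolJ]; exact ENNReal.ofReal_lt_top⟩
  have hQuniv : (Q univ).toReal = Real.pi * R ^ 3 := by
    have h : Q univ = volume B * volume J := by
      rw [hQdef, ← univ_prod_univ, Measure.prod_prod, Measure.restrict_apply_univ,
        Measure.restrict_apply_univ]
    rw [h, hvolB, hvolJ, ← ENNReal.ofReal_mul (by positivity),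
      ENNReal.toReal_ofReal (by positivity)]
    ring
  -- continuity
  have hWc : Continuous fun p : EuclideanSpace ℝ (Fin 2) × ℝ => W p.1 p.2 := hW.continuous
  have hder : ∀ (x : EuclideanSpace ℝ (Fin 2)) (t : ℝ), HasDerivAt (W x)
      ((fderiv ℝ (fun p : EuclideanSpace ℝ (Fin 2) × ℝ => W p.1 p.2) (x, t)) (0, 1)) t := by
    intro x t
    have h1' : HasFDerivAt (fun p : EuclideanSpace ℝ (Fin 2) × ℝ => W p.1 p.2)
        (fderiv ℝ (fun p : EuclideanSpace ℝ (Fin 2) × ℝ => W p.1 p.2) (x, t)) (x, t) :=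
      (hW.differentiable one_ne_zero (x, t)).hasFDerivAt
    have h2' : HasDerivAt (fun t' : ℝ => ((x, t') : EuclideanSpace ℝ (Fin 2) × ℝ))
        ((0 : EuclideanSpace ℝ (Fin 2)), (1:ℝ)) t :=
      (hasDerivAt_const t x).prodMk (hasDerivAt_id t)
    exact h1'.comp_hasDerivAt t h2'
  have hderiv_eq : ∀ x t, deriv (W x) t =
      (fderiv ℝ (fun p : EuclideanSpace ℝ (Fin 2) × ℝ => W p.1 p.2) (x, t)) (0, 1) :=
    fun x t => (hder x t).deriv
  have hD : ∀ x t, HasDerivAt (W x) (deriv (W x) t) t := fun x t => by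
    rw [hderiv_eq x t]; exact hder x t
  have hDc : Continuous fun p : EuclideanSpace ℝ (Fin 2) × ℝ => deriv (W p.1) p.2 := by
    have h := (hW.continuous_fderiv one_ne_zero).clm_apply
      (continuous_const : Continuous fun _ : EuclideanSpace ℝ (Fin 2) × ℝ =>
        ((0 : EuclideanSpace ℝ (Fin 2)), (1:ℝ)))
    have heq : (fun p : EuclideanSpace ℝ (Fin 2) × ℝ => deriv (W p.1) p.2) =
        fun p => (fderiv ℝ (fun p : EuclideanSpace ℝ (Fin 2) × ℝ => W p.1 p.2) p) (0, 1) :=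
      funext fun p => hderiv_eq p.1 p.2
    rw [heq]; exact h
  -- integrability machinery
  have hprodQ : Q = volume.restrict (B ×ˢ J) := by
    rw [hQdef, Measure.prod_restrict, ← Measure.volume_eq_prod]
  have hcpt : IsCompact (Metric.closedBall (0 : EuclideanSpace ℝ (Fin 2)) R ×ˢ Icc (0:ℝ) R) :=
    (isCompact_closedBall _ _).prod isCompact_Icc
  have hsub : B ×ˢ J ⊆ Metric.closedBall (0 : EuclideanSpace ℝ (Fin 2)) R ×ˢ Icc (0:ℝ) R :=
    prod_mono Metric.ball_subset_closedBall Ioo_subset_Icc_self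
  have hQintF : ∀ g : EuclideanSpace ℝ (Fin 2) × ℝ → EuclideanSpace ℝ (Fin m),
      Continuous g → Integrable g Q := by
    intro g hg
    rw [hprodQ]
    exact (hg.continuousOn.integrableOn_compact hcpt).mono_set hsub
  have hQintR : ∀ g : EuclideanSpace ℝ (Fin 2) × ℝ → ℝ, Continuous g → Integrable g Q := by
    intro g hg
    rw [hprodQ]
    exact (hg.continuousOn.integrableOn_compact hcpt).mono_set hsub
  have hprodQ' : (volume.restrict J).prod (volume.restrict B) = volume.restrict (J ×ˢ B) := by
    rw [Measure.prod_restrict, ← Measure.volume_eq_prod]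
  have hcpt' : IsCompact (Icc (0:ℝ) R ×ˢ Metric.closedBall (0 : EuclideanSpace ℝ (Fin 2)) R) :=
    isCompact_Icc.prod (isCompact_closedBall _ _)
  have hsub' : J ×ˢ B ⊆ Icc (0:ℝ) R ×ˢ Metric.closedBall (0 : EuclideanSpace ℝ (Fin 2)) R :=
    prod_mono Ioo_subset_Icc_self Metric.ball_subset_closedBall
  have hQintF' : ∀ g : ℝ × EuclideanSpace ℝ (Fin 2) → EuclideanSpace ℝ (Fin m),
      Continuous g → Integrable g ((volume.restrict J).prod (volume.restrict B)) := by
    intro g hg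
    rw [hprodQ']
    exact (hg.continuousOn.integrableOn_compact hcpt').mono_set hsub'
  have hQintR' : ∀ g : ℝ × EuclideanSpace ℝ (Fin 2) → ℝ,
      Continuous g → Integrable g ((volume.restrict J).prod (volume.restrict B)) := by
    intro g hg
    rw [hprodQ']
    exact (hg.continuousOn.integrableOn_compact hcpt').mono_set hsub'
  -- swap lemmas
  have hswapR : ∀ g : EuclideanSpace ℝ (Fin 2) → ℝ → ℝ,
      Continuous (fun p : EuclideanSpace ℝ (Fin 2) × ℝ => g p.1 p.2) →
      (∫ x3 in J, ∫ x in B, g x x3) = ∫ p, g p.1 p.2 ∂Q := by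
    intro g hg
    have hu1 : Integrable (Function.uncurry fun (x3 : ℝ) (x : EuclideanSpace ℝ (Fin 2)) => g x x3)
        ((volume.restrict J).prod (volume.restrict B)) :=
      hQintR' (fun q => g q.2 q.1) (hg.comp (continuous_snd.prodMk continuous_fst))
    have hu2 : Integrable (Function.uncurry fun (x : EuclideanSpace ℝ (Fin 2)) (x3 : ℝ) => g x x3)
        Q := hQintR _ hg
    have e1 : (∫ x3 in J, ∫ x in B, g x x3) = ∫ x in B, ∫ x3 in J, g x x3 :=
      integral_integral_swap hu1
    have e2 : (∫ x in B, ∫ x3 in J, g x x3) = ∫ p, g p.1 p.2 ∂Q := integral_integral hu2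
    rw [e1, e2]
  have hswapF : ∀ g : EuclideanSpace ℝ (Fin 2) → ℝ → EuclideanSpace ℝ (Fin m),
      Continuous (fun p : EuclideanSpace ℝ (Fin 2) × ℝ => g p.1 p.2) →
      (∫ x3 in J, ∫ x in B, g x x3) = ∫ p, g p.1 p.2 ∂Q := by
    intro g hg
    have hu1 : Integrable (Function.uncurry fun (x3 : ℝ) (x : EuclideanSpace ℝ (Fin 2)) => g x x3)
        ((volume.restrict J).prod (volume.restrict B)) :=
      hQintF' (fun q => g q.2 q.1) (hg.comp (continuous_snd.prodMk continuous_fst))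
    have hu2 : Integrable (Function.uncurry fun (x : EuclideanSpace ℝ (Fin 2)) (x3 : ℝ) => g x x3)
        Q := hQintF _ hg
    have e1 : (∫ x3 in J, ∫ x in B, g x x3) = ∫ x in B, ∫ x3 in J, g x x3 :=
      integral_integral_swap hu1
    have e2 : (∫ x in B, ∫ x3 in J, g x x3) = ∫ p, g p.1 p.2 ∂Q := integral_integral hu2
    rw [e1, e2]
  -- basic integrands
  have hWsc : Continuous fun p : EuclideanSpace ℝ (Fin 2) × ℝ => W p.1 s :=
    hWc.comp (continuous_fst.prodMk continuous_const)
  have hGint : Integrable (fun p : EuclideanSpace ℝ (Fin 2) × ℝ => W p.1 p.2) Q := hQintF _ hWc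
  have hGaint : Integrable (fun p : EuclideanSpace ℝ (Fin 2) × ℝ => ‖W p.1 p.2 - a‖) Q :=
    hQintR _ (hWc.sub continuous_const).norm
  have hGcint : Integrable (fun p : EuclideanSpace ℝ (Fin 2) × ℝ => ‖W p.1 p.2 - c‖) Q :=
    hQintR _ (hWc.sub continuous_const).norm
  have hGsint : Integrable (fun p : EuclideanSpace ℝ (Fin 2) × ℝ => ‖W p.1 p.2 - W p.1 s‖) Q :=
    hQintR _ (hWc.sub hWsc).norm
  have hWaint : Integrable (fun p : EuclideanSpace ℝ (Fin 2) × ℝ => ‖W p.1 s - a‖) Q :=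
    hQintR _ (hWsc.sub continuous_const).norm
  have hDnint : Integrable (fun p : EuclideanSpace ℝ (Fin 2) × ℝ => ‖deriv (W p.1) p.2‖) Q :=
    hQintR _ hDc.norm
  have hD2int : Integrable (fun p : EuclideanSpace ℝ (Fin 2) × ℝ => ‖deriv (W p.1) p.2‖ ^ 2) Q :=
    hQintR _ (hDc.norm.pow 2)
  -- convert hypotheses and goal to integrals over Q
  have h2' : ∫ p, ‖deriv (W p.1) p.2‖ ^ 2 ∂Q ≤ ε * R := by
    have e : (∫ x3 in J, ∫ x in B, ‖deriv (W x) x3‖ ^ 2) =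
        ∫ p, ‖deriv (W p.1) p.2‖ ^ 2 ∂Q := hswapR _ (hDc.norm.pow 2)
    rw [← e]; exact h2
  have hWQ : (∫ t3 in J, ∫ y in B, W y t3) = ∫ p, W p.1 p.2 ∂Q := hswapF _ hWc
  have hgoal : (∫ x3 in J, ∫ x in B, ‖W x x3 - c‖) = ∫ p, ‖W p.1 p.2 - c‖ ∂Q :=
    hswapR _ (hWc.sub continuous_const).norm
  -- slice bound
  have hslice : ∫ x in B, ‖W x s - a‖ ≤ ε * R ^ 2 := by
    have hX : (∫ x in B, ‖W x s - a‖) = ((1 / R ^ 2) * ∫ x in B, ‖W x s - a‖) * R ^ 2 := by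
      field_simp
    rw [hX]
    exact mul_le_mul_of_nonneg_right h1 (pow_pos hR 2).le
  have hconstJ : ∀ r : ℝ, (∫ _x3 in J, r) = R * r := by
    intro r
    rw [setIntegral_const, measureReal_def, hvolJ,
      ENNReal.toReal_ofReal hR.le, smul_eq_mul]
  -- second term: slice contribution
  have hterm2 : ∫ p, ‖W p.1 s - a‖ ∂Q ≤ ε * R ^ 3 := by
    have hu : Integrable (Function.uncurry fun (x : EuclideanSpace ℝ (Fin 2)) (_ : ℝ) =>
        ‖W x s - a‖) Q := hWaint
    have e1 : ∫ p, ‖W p.1 s - a‖ ∂Q = ∫ x in B, ∫ _x3 in J, ‖W x s - a‖ :=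
      (integral_integral hu).symm
    have e2 : (∫ x in B, ∫ _x3 in J, ‖W x s - a‖) = ∫ x in B, R * ‖W x s - a‖ := by
      congr 1
      funext x
      exact hconstJ _
    rw [e1, e2, integral_const_mul]
    calc R * ∫ x in B, ‖W x s - a‖ ≤ R * (ε * R ^ 2) :=
          mul_le_mul_of_nonneg_left hslice hR.le
      _ = ε * R ^ 3 := by ring
  -- pointwise FTC bound
  have hptwise : ∀ x : EuclideanSpace ℝ (Fin 2), ∀ x3 ∈ J,
      ‖W x x3 - W x s‖ ≤ ∫ t in J, ‖deriv (W x) t‖ := by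
    intro x x3 hx3
    have hcont : Continuous fun t => deriv (W x) t :=
      hDc.comp (continuous_const.prodMk continuous_id)
    have heq : ∫ t in s..x3, deriv (W x) t = W x x3 - W x s :=
      intervalIntegral.integral_eq_sub_of_hasDerivAt (fun t _ => hD x t)
        (hcont.intervalIntegrable _ _)
    have hs' : 0 < s ∧ s < R := hs
    have hx3' : 0 < x3 ∧ x3 < R := hx3
    have hsubI : Set.uIoc s x3 ⊆ J := by
      intro t ht
      rcases Set.mem_uIoc.1 ht with ⟨ht1, ht2⟩ | ⟨ht1, ht2⟩ <;>
        exact ⟨by linarith [hs'.1, hx3'.1], by linarith [hs'.2, hx3'.2]⟩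
    have hIntJ : IntegrableOn (fun t => ‖deriv (W x) t‖) J volume :=
      ((hcont.norm.continuousOn).integrableOn_compact (isCompact_Icc (a := (0:ℝ)) (b := R))).mono_set
        Ioo_subset_Icc_self
    calc ‖W x x3 - W x s‖ = ‖∫ t in s..x3, deriv (W x) t‖ := by rw [heq]
      _ ≤ ∫ t in Set.uIoc s x3, ‖deriv (W x) t‖ := intervalIntegral.norm_integral_le_integral_norm_uIoc
      _ ≤ ∫ t in J, ‖deriv (W x) t‖ :=
          setIntegral_mono_set hIntJ (Filter.Eventually.of_forall fun t => norm_nonneg _)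
            (HasSubset.Subset.eventuallyLE hsubI)
  -- first term via FTC
  have hterm1 : ∫ p, ‖W p.1 p.2 - W p.1 s‖ ∂Q ≤ R * ∫ p, ‖deriv (W p.1) p.2‖ ∂Q := by
    have hu : Integrable (Function.uncurry fun (x : EuclideanSpace ℝ (Fin 2)) (x3 : ℝ) =>
        ‖W x x3 - W x s‖) Q := hGsint
    have e1 : ∫ p, ‖W p.1 p.2 - W p.1 s‖ ∂Q = ∫ x in B, ∫ x3 in J, ‖W x x3 - W x s‖ :=
      (integral_integral hu).symm
    have hDFint : Integrable (fun p : EuclideanSpace ℝ (Fin 2) × ℝ => deriv (W p.1) p.2) Q :=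
      hQintF _ hDc
    have hfint : Integrable (fun x => ∫ x3 in J, ‖deriv (W x) x3‖) (volume.restrict B) :=
      hDFint.integral_norm_prod_left
    have inner_le : ∀ x, (∫ x3 in J, ‖W x x3 - W x s‖) ≤ R * ∫ x3 in J, ‖deriv (W x) x3‖ := by
      intro x
      have h' : (∫ x3 in J, ‖W x x3 - W x s‖) ≤ ∫ _x3 in J, (∫ t in J, ‖deriv (W x) t‖) := by
        apply integral_mono_of_nonneg (Filter.Eventually.of_forall fun _ => norm_nonneg _)
          (integrable_const _)
        filter_upwards [ae_restrict_mem measurableSet_Ioo] with x3 hx3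
        exact hptwise x x3 hx3
      calc (∫ x3 in J, ‖W x x3 - W x s‖) ≤ ∫ _x3 in J, (∫ t in J, ‖deriv (W x) t‖) := h'
        _ = R * ∫ t in J, ‖deriv (W x) t‖ := hconstJ _
    have outer : (∫ x in B, ∫ x3 in J, ‖W x x3 - W x s‖) ≤
        ∫ x in B, R * ∫ x3 in J, ‖deriv (W x) x3‖ := by
      apply integral_mono_of_nonneg
        (Filter.Eventually.of_forall fun x => integral_nonneg fun _ => norm_nonneg _)
        (hfint.const_mul R)
        (Filter.Eventually.of_forall inner_le)
    rw [e1]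
    refine outer.trans ?_
    rw [integral_const_mul]
    have e2 : (∫ x in B, ∫ x3 in J, ‖deriv (W x) x3‖) = ∫ p, ‖deriv (W p.1) p.2‖ ∂Q :=
      integral_integral hDnint
    rw [e2]
  -- Cauchy-Schwarz
  have hCS : ∫ p, ‖deriv (W p.1) p.2‖ ∂Q ≤
      Real.sqrt (Real.pi * R ^ 3) * Real.sqrt (ε * R) := by
    have h' := aux_cs (μ := Q) (f := fun p => ‖deriv (W p.1) p.2‖)
      hDc.norm.aestronglyMeasurable (fun p => norm_nonneg _) hD2int
    rw [hQuniv] at h'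
    refine h'.trans ?_
    exact mul_le_mul_of_nonneg_left (Real.sqrt_le_sqrt h2') (Real.sqrt_nonneg _)
  -- comparing the two constants a and c
  have hac : Real.pi * R ^ 3 * ‖a - c‖ ≤ ∫ p, ‖W p.1 p.2 - a‖ ∂Q := by
    have hkey : a - c = (Real.pi * R ^ 3)⁻¹ • ∫ p, (a - W p.1 p.2) ∂Q := by
      rw [integral_sub (integrable_const a) hGint, integral_const, smul_sub, smul_smul,
        measureReal_def, hQuniv, inv_mul_cancel₀ hπR3.ne', one_smul, hcdef, hWQ]
    rw [hkey]
    have e1 : Real.pi * R ^ 3 * ‖(Real.pi * R ^ 3)⁻¹ • ∫ p, (a - W p.1 p.2) ∂Q‖ =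
        ‖∫ p, (a - W p.1 p.2) ∂Q‖ := by
      rw [norm_smul, Real.norm_eq_abs, abs_of_pos (inv_pos.2 hπR3), ← mul_assoc,
        mul_inv_cancel₀ hπR3.ne', one_mul]
    rw [e1]
    calc ‖∫ p, (a - W p.1 p.2) ∂Q‖ ≤ ∫ p, ‖a - W p.1 p.2‖ ∂Q := norm_integral_le_integral_norm _
      _ = ∫ p, ‖W p.1 p.2 - a‖ ∂Q := by simp_rw [norm_sub_rev]
  -- assembly
  have main1 : ∫ p, ‖W p.1 p.2 - c‖ ∂Q ≤ 2 * ∫ p, ‖W p.1 p.2 - a‖ ∂Q := by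
    have tri : ∀ p : EuclideanSpace ℝ (Fin 2) × ℝ,
        ‖W p.1 p.2 - c‖ ≤ ‖W p.1 p.2 - a‖ + ‖a - c‖ := by
      intro p
      calc ‖W p.1 p.2 - c‖ = ‖(W p.1 p.2 - a) + (a - c)‖ := by rw [sub_add_sub_cancel]
        _ ≤ ‖W p.1 p.2 - a‖ + ‖a - c‖ := norm_add_le _ _
    calc ∫ p, ‖W p.1 p.2 - c‖ ∂Q ≤ ∫ p, (‖W p.1 p.2 - a‖ + ‖a - c‖) ∂Q :=
          integral_mono hGcint (hGaint.add (integrable_const _)) tri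
      _ = (∫ p, ‖W p.1 p.2 - a‖ ∂Q) + ∫ _p, ‖a - c‖ ∂Q :=
          integral_add hGaint (integrable_const _)
      _ = (∫ p, ‖W p.1 p.2 - a‖ ∂Q) + Real.pi * R ^ 3 * ‖a - c‖ := by
          rw [integral_const, measureReal_def, hQuniv, smul_eq_mul]
      _ ≤ (∫ p, ‖W p.1 p.2 - a‖ ∂Q) + ∫ p, ‖W p.1 p.2 - a‖ ∂Q := by linarith [hac]
      _ = 2 * ∫ p, ‖W p.1 p.2 - a‖ ∂Q := by ring
  have main2 : ∫ p, ‖W p.1 p.2 - a‖ ∂Q ≤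
      Real.sqrt Real.pi * Real.sqrt ε * R ^ 3 + ε * R ^ 3 := by
    have tri2 : ∀ p : EuclideanSpace ℝ (Fin 2) × ℝ,
        ‖W p.1 p.2 - a‖ ≤ ‖W p.1 p.2 - W p.1 s‖ + ‖W p.1 s - a‖ := by
      intro p
      calc ‖W p.1 p.2 - a‖ = ‖(W p.1 p.2 - W p.1 s) + (W p.1 s - a)‖ := by rw [sub_add_sub_cancel]
        _ ≤ _ := norm_add_le _ _
    have halg : Real.sqrt (Real.pi * R ^ 3) * Real.sqrt (ε * R) =
        Real.sqrt Real.pi * Real.sqrt ε * R ^ 2 := by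
      rw [← Real.sqrt_mul (by positivity),
        show Real.pi * R ^ 3 * (ε * R) = (Real.pi * ε) * (R ^ 2) ^ 2 by ring,
        Real.sqrt_mul (by positivity), Real.sqrt_sq (by positivity), Real.sqrt_mul hπ.le]
    calc ∫ p, ‖W p.1 p.2 - a‖ ∂Q
        ≤ ∫ p, (‖W p.1 p.2 - W p.1 s‖ + ‖W p.1 s - a‖) ∂Q :=
          integral_mono hGaint (hGsint.add hWaint) tri2
      _ = (∫ p, ‖W p.1 p.2 - W p.1 s‖ ∂Q) + ∫ p, ‖W p.1 s - a‖ ∂Q :=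
          integral_add hGsint hWaint
      _ ≤ (R * ∫ p, ‖deriv (W p.1) p.2‖ ∂Q) + ε * R ^ 3 := add_le_add hterm1 hterm2
      _ ≤ R * (Real.sqrt (Real.pi * R ^ 3) * Real.sqrt (ε * R)) + ε * R ^ 3 := by
          have := mul_le_mul_of_nonneg_left hCS hR.le
          linarith
      _ = Real.sqrt Real.pi * Real.sqrt ε * R ^ 3 + ε * R ^ 3 := by rw [halg]; ring
  rw [hgoal]
  have hfin : ∫ p, ‖W p.1 p.2 - c‖ ∂Q ≤
      2 * (Real.sqrt Real.pi * Real.sqrt ε * R ^ 3 + ε * R ^ 3) := by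
    refine main1.trans ?_
    linarith [main2]
  calc (1 / R ^ 3) * ∫ p, ‖W p.1 p.2 - c‖ ∂Q
      ≤ (1 / R ^ 3) * (2 * (Real.sqrt Real.pi * Real.sqrt ε * R ^ 3 + ε * R ^ 3)) :=
        mul_le_mul_of_nonneg_left hfin (by positivity)
    _ = 2 * Real.sqrt Real.pi * Real.sqrt ε + 2 * ε := by field_simp
    _ ≤ (2 * Real.sqrt Real.pi + 2) * (Real.sqrt ε + ε) := by
        nlinarith [Real.sqrt_nonneg Real.pi, Real.sqrt_nonneg ε, hε.le]
end
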